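/- Consider the knapsack problem with arbitrary fixed profits p_1,...,p_n ∈ ℝ≥0 where each weight w_i is drawn uniformly at random from an arbitrary interval A_i ⊆ [0,1] of length 1/φ, independently of the other weights. Then the expected number of Pareto-optimal solutions in {0,1}^n is at most n²φ + 1. -/

import Mathlib

open MeasureTheory
open scoped ProbabilityTheory ENNReal

def dotB {n : ℕ} (c : Fin n → ℝ) (x : Fin n → Bool) : ℝ :=
  ∑ i, c i * (if x i then 1 else 0)

def dominates {n : ℕ} (p w : Fin n → ℝ) (y x : Fin n → Bool) : Prop :=
  dotB p x ≤ dotB p y ∧ dotB w y ≤ dotB w x ∧ (dotB p x < dotB p y ∨ dotB w y < dotB w x)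

/-- The number of Pareto-optimal solutions, counting distinct (profit, weight) values. -/
noncomputable def paretoCount {n : ℕ} (p w : Fin n → ℝ) : ℕ := by
  classical
  exact ((Finset.univ.filter fun x : Fin n → Bool =>
      ∀ y : Fin n → Bool, ¬ dominates p w y x).image
    (fun x => (dotB p x, dotB w x))).card

open Set

def Esel {n : ℕ} (p : Fin n → ℝ) (i : Fin n) (t ε : ℝ) : Set (Fin n → ℝ) :=
  {v | ∃ x : Fin n → Bool, x i = true ∧
    (∀ y : Fin n → Bool, y i = false → dotB v y ≤ t → dotB p y < dotB p x) ∧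
    (∀ z : Fin n → Bool, z i = true →
      (∀ y : Fin n → Bool, y i = false → dotB v y ≤ t → dotB p y < dotB p z) →
      dotB v x ≤ dotB v z) ∧
    dotB v x ∈ Set.Ioc t (t + ε)}

def Epar {n : ℕ} (p : Fin n → ℝ) (t ε : ℝ) : Set (Fin n → ℝ) :=
  {v | ∃ x : Fin n → Bool, (∀ y, ¬ dominates p v y x) ∧ dotB v x ∈ Set.Ioc t (t + ε)}

lemma dotB_mono {n : ℕ} {v : Fin n → ℝ} (hv : ∀ j, 0 ≤ v j) {x y : Fin n → Bool}
    (h : ∀ j, x j = true → y j = true) : dotB v x ≤ dotB v y := by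
  refine Finset.sum_le_sum fun j _ => ?_
  rcases hxj : x j with _ | _
  · simp only [hxj, if_false, mul_zero, Bool.false_eq_true]
    exact mul_nonneg (hv j) (by positivity)
  · simp [hxj, h j hxj]

lemma dotB_false {n : ℕ} (v : Fin n → ℝ) : dotB v (fun _ => false) = 0 := by
  simp [dotB]

lemma measurable_dotB {n : ℕ} (x : Fin n → Bool) :
    Measurable (fun v : Fin n → ℝ => dotB v x) := by
  unfold dotB
  exact Finset.measurable_sum _ fun j _ => (measurable_pi_apply j).mul measurable_const

lemma measurableSet_cond {n : ℕ} (p : Fin n → ℝ) (t : ℝ) (x : Fin n → Bool) (i : Fin n) :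
    MeasurableSet {v : Fin n → ℝ |
      ∀ y : Fin n → Bool, y i = false → dotB v y ≤ t → dotB p y < dotB p x} := by
  have : {v : Fin n → ℝ |
      ∀ y : Fin n → Bool, y i = false → dotB v y ≤ t → dotB p y < dotB p x}
      = ⋂ y : Fin n → Bool,
        {v : Fin n → ℝ | y i = false → dotB v y ≤ t → dotB p y < dotB p x} := by
    ext v; simp
  rw [this]
  refine MeasurableSet.iInter fun y => ?_
  by_cases h1 : y i = false
  · by_cases h2 : dotB p y < dotB p x
    · simp only [h1, h2, imp_true_iff]; exact MeasurableSet.univ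
    · have : {v : Fin n → ℝ | y i = false → dotB v y ≤ t → dotB p y < dotB p x}
          = {v : Fin n → ℝ | dotB v y ≤ t}ᶜ := by
        ext v; simp [h1, h2]
      rw [this]
      exact (measurableSet_le (measurable_dotB y) measurable_const).compl
  · have : {v : Fin n → ℝ | y i = false → dotB v y ≤ t → dotB p y < dotB p x} = univ := by
      ext v; simp [h1]
    rw [this]; exact MeasurableSet.univ

lemma measurableSet_Esel {n : ℕ} (p : Fin n → ℝ) (i : Fin n) (t ε : ℝ) :
    MeasurableSet (Esel p i t ε) := by
  have : Esel p i t ε = ⋃ x : Fin n → Bool,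
      ({v : Fin n → ℝ | x i = true}
        ∩ ({v | ∀ y : Fin n → Bool, y i = false → dotB v y ≤ t → dotB p y < dotB p x}
        ∩ ((⋂ z : Fin n → Bool, {v : Fin n → ℝ | z i = true →
            (∀ y : Fin n → Bool, y i = false → dotB v y ≤ t → dotB p y < dotB p z) →
            dotB v x ≤ dotB v z})
        ∩ {v : Fin n → ℝ | dotB v x ∈ Set.Ioc t (t + ε)}))) := by
    ext v
    simp only [Esel, mem_iUnion, mem_inter_iff, mem_iInter, mem_setOf_eq]
  rw [this]
  refine MeasurableSet.iUnion fun x => ?_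
  refine MeasurableSet.inter (by by_cases h : x i = true <;> simp [h]) ?_
  refine MeasurableSet.inter (measurableSet_cond p t x i) ?_
  refine MeasurableSet.inter (MeasurableSet.iInter fun z => ?_) ?_
  · by_cases h1 : z i = true
    · have : {v : Fin n → ℝ | z i = true →
          (∀ y : Fin n → Bool, y i = false → dotB v y ≤ t → dotB p y < dotB p z) →
          dotB v x ≤ dotB v z}
          = {v | ∀ y : Fin n → Bool, y i = false → dotB v y ≤ t → dotB p y < dotB p z}ᶜ
            ∪ {v | dotB v x ≤ dotB v z} := by
        ext v; simp [h1, imp_iff_not_or]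
      rw [this]
      exact ((measurableSet_cond p t z i).compl).union
        (measurableSet_le (measurable_dotB x) (measurable_dotB z))
    · have : {v : Fin n → ℝ | z i = true →
          (∀ y : Fin n → Bool, y i = false → dotB v y ≤ t → dotB p y < dotB p z) →
          dotB v x ≤ dotB v z} = univ := by
        ext v; simp [h1]
      rw [this]; exact MeasurableSet.univ
  · exact (measurable_dotB x) measurableSet_Ioc

lemma measurableSet_Epar {n : ℕ} (p : Fin n → ℝ) (t ε : ℝ) :
    MeasurableSet (Epar p t ε) := by
  have : Epar p t ε = ⋃ x : Fin n → Bool,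
      ((⋂ y : Fin n → Bool, {v : Fin n → ℝ | dominates p v y x}ᶜ)
        ∩ {v : Fin n → ℝ | dotB v x ∈ Set.Ioc t (t + ε)}) := by
    ext v
    simp only [Epar, mem_iUnion, mem_inter_iff, mem_iInter, mem_compl_iff, mem_setOf_eq]
  rw [this]
  refine MeasurableSet.iUnion fun x => ?_
  refine MeasurableSet.inter (MeasurableSet.iInter fun y => ?_)
    ((measurable_dotB x) measurableSet_Ioc)
  have : {v : Fin n → ℝ | dominates p v y x}
      = {v : Fin n → ℝ | dotB p x ≤ dotB p y}
        ∩ ({v | dotB v y ≤ dotB v x}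
          ∩ ({v | dotB p x < dotB p y} ∪ {v | dotB v y < dotB v x})) := by
    ext v; simp only [dominates, mem_inter_iff, mem_union, mem_setOf_eq]
  rw [this]
  refine MeasurableSet.compl ?_
  refine MeasurableSet.inter (by by_cases h : dotB p x ≤ dotB p y <;> simp [h]) ?_
  refine MeasurableSet.inter (measurableSet_le (measurable_dotB y) (measurable_dotB x)) ?_
  exact MeasurableSet.union (by by_cases h : dotB p x < dotB p y <;> simp [h])
    (measurableSet_lt (measurable_dotB y) (measurable_dotB x))

/-- Covering lemma: if some Pareto-optimal solution has weight in `(t, t+ε]`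
(with nonnegative weights, `t ≥ 0`) then one of the selection events occurs. -/
lemma Epar_subset_iUnion_Esel {n : ℕ} (p : Fin n → ℝ) {v : Fin n → ℝ}
    (hv : ∀ j, 0 ≤ v j) {t ε : ℝ} (ht : 0 ≤ t) (hvt : v ∈ Epar p t ε) :
    ∃ i, v ∈ Esel p i t ε := by
  classical
  obtain ⟨x0, hx0par, hx0w⟩ := hvt
  -- feasible set and its profit maximizer
  set F : Finset (Fin n → Bool) := Finset.univ.filter (fun x => dotB v x ≤ t) with hF
  have hFne : F.Nonempty := ⟨fun _ => false, by simp [hF, dotB_false, ht]⟩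
  obtain ⟨xs, hxsF, hxsmax⟩ := F.exists_max_image (fun x => dotB p x) hFne
  have hxsfeas : dotB v xs ≤ t := by simpa [hF] using hxsF
  have hxsmax' : ∀ y : Fin n → Bool, dotB v y ≤ t → dotB p y ≤ dotB p xs := by
    intro y hy
    exact hxsmax y (by simp [hF, hy])
  -- profit of x0 exceeds the maximum feasible profit
  have hpx0 : dotB p xs < dotB p x0 := by
    by_contra h
    push_neg at h
    exact hx0par xs ⟨h, le_trans hxsfeas (le_of_lt hx0w.1), Or.inr (lt_of_le_of_lt hxsfeas hx0w.1)⟩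
  -- there is a coordinate in x0 but not in xs
  have hex : ∃ i, x0 i = true ∧ xs i = false := by
    by_contra h
    push_neg at h
    have : ∀ j, x0 j = true → xs j = true := by
      intro j hj
      rcases hxs : xs j with _ | _
      · exact absurd hxs (h j hj)
      · rfl
    exact absurd (le_trans (dotB_mono hv this) hxsfeas) (not_le.2 hx0w.1)
  obtain ⟨i, hx0i, hxsi⟩ := hex
  refine ⟨i, ?_⟩
  -- the candidate set is nonempty, take a weight minimizer
  set C : Finset (Fin n → Bool) := Finset.univ.filter (fun z => z i = true ∧
    (∀ y : Fin n → Bool, y i = false → dotB v y ≤ t → dotB p y < dotB p z)) with hC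
  have hx0C : x0 ∈ C := by
    simp only [hC, Finset.mem_filter, Finset.mem_univ, true_and]
    exact ⟨hx0i, fun y _ hy => lt_of_le_of_lt (hxsmax' y hy) hpx0⟩
  obtain ⟨xh, hxhC, hxhmin⟩ := C.exists_min_image (fun z => dotB v z) ⟨x0, hx0C⟩
  have hxhC' := hxhC
  simp only [hC, Finset.mem_filter, Finset.mem_univ, true_and] at hxhC'
  refine ⟨xh, hxhC'.1, hxhC'.2, ?_, ?_, ?_⟩
  · intro z hz1 hz2
    exact hxhmin z (Finset.mem_filter.2 ⟨Finset.mem_univ z, hz1, hz2⟩)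
  · -- t < dotB v xh
    by_contra h
    push_neg at h
    exact absurd (hxhC'.2 xs hxsi hxsfeas) (not_lt.2 (hxsmax' xh h))
  · exact le_trans (hxhmin x0 hx0C) hx0w.2

lemma dotB_nonneg {n : ℕ} {v : Fin n → ℝ} (hv : ∀ j, 0 ≤ v j) (x : Fin n → Bool) :
    0 ≤ dotB v x :=
  Finset.sum_nonneg fun j _ => mul_nonneg (hv j) (by positivity)

lemma dotB_le_n {n : ℕ} {v : Fin n → ℝ} (hv1 : ∀ j, v j ≤ 1) (hv : ∀ j, 0 ≤ v j)
    (x : Fin n → Bool) : dotB v x ≤ n := by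
  calc dotB v x ≤ ∑ _j : Fin n, (1 : ℝ) := Finset.sum_le_sum fun j _ => by
        rcases hxj : x j with _ | _ <;> simp [hxj, hv j, hv1 j]
    _ = n := by simp

lemma dotB_update {n : ℕ} (v : Fin n → ℝ) (i : Fin n) (u : ℝ) (x : Fin n → Bool) :
    dotB (Function.update v i u) x
      = (if x i then u else 0) + dotB (Function.update v i 0) x := by
  unfold dotB
  rw [← Finset.sum_erase_add _ _ (Finset.mem_univ i)]
  conv_rhs => rw [← Finset.sum_erase_add _ _ (Finset.mem_univ i)]
  have h1 : ∀ j ∈ Finset.univ.erase i,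
      Function.update v i u j * (if x j then 1 else 0)
        = Function.update v i 0 j * (if x j then 1 else 0) := by
    intro j hj
    rw [Function.update_of_ne (Finset.mem_erase.1 hj).1,
      Function.update_of_ne (Finset.mem_erase.1 hj).1]
  rw [Finset.sum_congr rfl h1]
  simp [Function.update_self, mul_ite]
  ring

/-- The `i`-sections of `Esel p i t ε` are contained in intervals of length `ε`. -/
lemma Esel_section_subset {n : ℕ} (p : Fin n → ℝ) (v : Fin n → ℝ) (i : Fin n) (t ε : ℝ) :
    ∃ c : ℝ, {u : ℝ | Function.update v i u ∈ Esel p i t ε} ⊆ Set.Ioc c (c + ε) := by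
  classical
  by_cases hne : ∃ u₀ : ℝ, Function.update v i u₀ ∈ Esel p i t ε
  swap
  · refine ⟨0, fun u hu => absurd ⟨u, hu⟩ hne⟩
  obtain ⟨u₀, x₀, hx₀i, hx₀C, hx₀min, _⟩ := hne
  -- weight without coordinate i
  set g : (Fin n → Bool) → ℝ := fun z => dotB (Function.update v i 0) z with hg
  have hcond : ∀ (u u' : ℝ) (y : Fin n → Bool), y i = false →
      dotB (Function.update v i u) y = dotB (Function.update v i u') y := by
    intro u u' y hy
    rw [dotB_update v i u y, dotB_update v i u' y, hy]
    simp
  have hdot : ∀ (u : ℝ) (z : Fin n → Bool), z i = true →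
      dotB (Function.update v i u) z = u + g z := by
    intro u z hz
    rw [dotB_update, hz]; simp [hg]
  refine ⟨t - g x₀, ?_⟩
  intro u hu
  obtain ⟨x, hxi, hxC, hxmin, hxw⟩ := hu
  -- transfer the candidate conditions between u and u₀
  have hCtrans : ∀ (u u' : ℝ) (z : Fin n → Bool),
      (∀ y : Fin n → Bool, y i = false → dotB (Function.update v i u) y ≤ t →
        dotB p y < dotB p z) →
      (∀ y : Fin n → Bool, y i = false → dotB (Function.update v i u') y ≤ t →
        dotB p y < dotB p z) := by
    intro u u' z h y hy hwy
    exact h y hy (by rwa [hcond u u' y hy])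
  have h1 : g x ≤ g x₀ := by
    have := hxmin x₀ hx₀i (hCtrans u₀ u x₀ hx₀C)
    rw [hdot u x hxi, hdot u x₀ hx₀i] at this
    linarith
  have h2 : g x₀ ≤ g x := by
    have := hx₀min x hxi (hCtrans u u₀ x hxC)
    rw [hdot u₀ x hxi, hdot u₀ x₀ hx₀i] at this
    linarith
  have hgeq : g x = g x₀ := le_antisymm h1 h2
  rw [hdot u x hxi, hgeq] at hxw
  obtain ⟨hl, hr⟩ := hxw
  exact ⟨by linarith, by linarith⟩

open Classical in
/-- The Pareto count equals the number of distinct weights of Pareto-optimal solutions. -/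
lemma paretoCount_eq_card_weights {n : ℕ} (p v : Fin n → ℝ) :
    paretoCount p v = ((Finset.univ.filter fun x : Fin n → Bool =>
      ∀ y : Fin n → Bool, ¬ dominates p v y x).image (fun x => dotB v x)).card := by
  classical
  set F := (Finset.univ.filter fun x : Fin n → Bool =>
      ∀ y : Fin n → Bool, ¬ dominates p v y x) with hF
  have hkey : ∀ x ∈ F, ∀ y ∈ F, dotB v x = dotB v y → dotB p x = dotB p y := by
    intro x hx y hy hw
    simp only [hF, Finset.mem_filter] at hx hy
    by_contra hne
    rcases lt_or_gt_of_ne hne with h | h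
    · exact hx.2 y ⟨le_of_lt h, le_of_eq hw.symm, Or.inl h⟩
    · exact hy.2 x ⟨le_of_lt h, le_of_eq hw, Or.inl h⟩
  have himg : (F.image (fun x => (dotB p x, dotB v x))).image Prod.snd
      = F.image (fun x => dotB v x) := by
    rw [Finset.image_image]
    rfl
  have hinj : Set.InjOn Prod.snd (↑(F.image (fun x => (dotB p x, dotB v x))) : Set (ℝ × ℝ)) := by
    intro q hq q' hq' hsnd
    simp only [Finset.coe_image, Set.mem_image, Finset.mem_coe] at hq hq'
    obtain ⟨x, hx, rfl⟩ := hq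
    obtain ⟨y, hy, rfl⟩ := hq'
    simp only at hsnd
    have := hkey x hx y hy hsnd
    simp [this, hsnd]
  rw [paretoCount, ← hF, ← himg, Finset.card_image_of_injOn hinj]

/-- Every finite set of reals has a positive minimal gap. -/
lemma exists_min_gap (S : Finset ℝ) :
    ∃ δ : ℝ, 0 < δ ∧ ∀ w ∈ S, ∀ w' ∈ S, w ≠ w' → δ ≤ |w - w'| := by
  classical
  rcases Finset.eq_empty_or_nonempty S.offDiag with he | hne
  · refine ⟨1, one_pos, fun w hw w' hw' hww => ?_⟩
    exact absurd ((Finset.mem_offDiag (x := (w, w'))).2 ⟨hw, hw', hww⟩) (by simp [he])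
  · refine ⟨S.offDiag.inf' hne (fun q => |q.1 - q.2|), ?_, ?_⟩
    · rw [Finset.lt_inf'_iff]
      intro q hq
      have := (Finset.mem_offDiag.1 hq).2.2
      simpa [abs_pos, sub_ne_zero] using this
    · intro w hw w' hw' hww
      exact Finset.inf'_le _ ((Finset.mem_offDiag (x := (w, w'))).2 ⟨hw, hw', hww⟩)
open Classical in
/-- Discretization: for fine enough partitions of `[0,n]` into `m` pieces, the Pareto
count is at most `1` plus the number of pieces containing the weight of some
Pareto-optimal solution. -/
lemma count_le_indicator_sum {n : ℕ} (p v : Fin n → ℝ) (hv0 : ∀ j, 0 ≤ v j)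
    (hv1 : ∀ j, v j ≤ 1) :
    ∃ M : ℕ, ∀ m : ℕ, M ≤ m →
      (paretoCount p v : ℝ≥0∞) ≤ 1 + ∑ k ∈ Finset.range m,
        (Epar p (k * ((n : ℝ) / m)) ((n : ℝ) / m)).indicator 1 v := by
  classical
  set F := (Finset.univ.filter fun x : Fin n → Bool =>
      ∀ y : Fin n → Bool, ¬ dominates p v y x) with hF
  set Wts := F.image (fun x => dotB v x) with hWts
  set P := Wts.filter (fun w => 0 < w) with hP
  have hWts_mem : ∀ w ∈ Wts, 0 ≤ w ∧ w ≤ n ∧ ∃ x : Fin n → Bool,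
      (∀ y, ¬ dominates p v y x) ∧ dotB v x = w := by
    intro w hw
    obtain ⟨x, hx, rfl⟩ := Finset.mem_image.1 hw
    simp only [hF, Finset.mem_filter] at hx
    exact ⟨dotB_nonneg hv0 x, dotB_le_n hv1 hv0 x, x, hx.2, rfl⟩
  -- the count is at most `1 + P.card`
  have hcount : paretoCount p v ≤ 1 + P.card := by
    rw [paretoCount_eq_card_weights, ← hF, ← hWts]
    have hsplit : Wts.card ≤ P.card + (Wts.filter (fun w => ¬ 0 < w)).card := by
      conv_lhs => rw [← Finset.filter_union_filter_not_eq (fun w => 0 < w) Wts]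
      exact Finset.card_union_le _ _
    have hnotpos : Wts.filter (fun w => ¬ 0 < w) ⊆ {0} := by
      intro w hw
      rw [Finset.mem_filter] at hw
      have := (hWts_mem w hw.1).1
      have : w = 0 := le_antisymm (not_lt.1 hw.2) this
      simp [this]
    have := Finset.card_le_card hnotpos
    simp only [Finset.card_singleton] at this
    omega
  obtain ⟨δ, hδ, hgap⟩ := exists_min_gap Wts
  refine ⟨⌈(n : ℝ) / δ⌉₊ + 1, fun m hm => ?_⟩
  have hm1 : 1 ≤ m := le_trans (Nat.le_add_left 1 _) hm
  have hm0 : (0 : ℝ) < m := by exact_mod_cast hm1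
  have hmδ : (n : ℝ) / m < δ := by
    have h1 : (n : ℝ) / δ < m := by
      calc (n : ℝ) / δ ≤ ⌈(n : ℝ) / δ⌉₊ := Nat.le_ceil _
        _ < m := by exact_mod_cast Nat.lt_of_lt_of_le (Nat.lt_succ_self _) hm
    rw [div_lt_iff₀ hm0]
    have := (div_lt_iff₀ hδ).1 h1
    linarith
  -- main step : `P.card` is at most the sum of indicators
  have hPsum : (P.card : ℝ≥0∞) ≤ ∑ k ∈ Finset.range m,
      (Epar p (k * ((n : ℝ) / m)) ((n : ℝ) / m)).indicator 1 v := by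
    rcases P.eq_empty_or_nonempty with he | hne
    · simp [he]
    · obtain ⟨w₀, hw₀⟩ := hne
      have hn0 : (0 : ℝ) < n := by
        rw [Finset.mem_filter] at hw₀
        exact lt_of_lt_of_le hw₀.2 (hWts_mem w₀ hw₀.1).2.1
      set km : ℝ → ℕ := fun w => (⌈w * m / n⌉).toNat - 1 with hkm
      have hbounds : ∀ w ∈ P, km w < m ∧ km w * ((n : ℝ)/m) < w ∧ w ≤ (km w + 1) * ((n : ℝ)/m) := by
        intro w hw
        rw [Finset.mem_filter] at hw
        have hw0 : 0 < w := hw.2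
        have hwn : w ≤ n := (hWts_mem w hw.1).2.1
        set r := w * m / n with hr
        have hr0 : 0 < r := by positivity
        have hrm : r ≤ m := by
          rw [hr, div_le_iff₀ hn0]
          nlinarith
        have hc1 : 0 < ⌈r⌉ := Int.ceil_pos.2 hr0
        have hcm : ⌈r⌉ ≤ (m : ℤ) := Int.ceil_le.2 (by exact_mod_cast hrm)
        have hKcast : ((⌈r⌉.toNat : ℤ)) = ⌈r⌉ := Int.toNat_of_nonneg (le_of_lt hc1)
        have hK1 : 1 ≤ ⌈r⌉.toNat := by omega
        have hKm : ⌈r⌉.toNat ≤ m := by omega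
        have hkmw : km w + 1 = ⌈r⌉.toNat := by
          simp only [hkm]
          rw [← hr]
          omega
        have hrK : r ≤ (⌈r⌉.toNat : ℝ) := by
          have := Int.le_ceil r
          rw [← hKcast] at this
          exact_mod_cast this
        have hKr : ((⌈r⌉.toNat : ℝ)) - 1 < r := by
          have := Int.ceil_lt_add_one r
          rw [← hKcast] at this
          have : ((⌈r⌉.toNat : ℝ)) < r + 1 := by exact_mod_cast this
          linarith
        have hwr : w = r * ((n : ℝ)/m) := by
          rw [hr]
          field_simp
        have hkmr : (km w : ℝ) = ((⌈r⌉.toNat : ℝ)) - 1 := by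
          have : (km w : ℕ) = ⌈r⌉.toNat - 1 := rfl
          rw [this, Nat.cast_sub hK1]
          simp
        have hnm : (0 : ℝ) < (n : ℝ)/m := by positivity
        refine ⟨by omega, ?_, ?_⟩
        · calc (km w : ℝ) * ((n : ℝ)/m) = ((⌈r⌉.toNat : ℝ) - 1) * ((n : ℝ)/m) := by
                rw [hkmr]
            _ < r * ((n : ℝ)/m) := mul_lt_mul_of_pos_right hKr hnm
            _ = w := hwr.symm
        · calc w = r * ((n : ℝ)/m) := hwr
            _ ≤ (⌈r⌉.toNat : ℝ) * ((n : ℝ)/m) := mul_le_mul_of_nonneg_right hrK hnm.le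
            _ = ((km w : ℝ) + 1) * ((n : ℝ)/m) := by rw [hkmr]; ring
      have hinj : ∀ w ∈ P, ∀ w' ∈ P, km w = km w' → w = w' := by
        intro w hw w' hw' hk
        by_contra hne'
        have h1 := hbounds w hw
        have h2 := hbounds w' hw'
        rw [hk] at h1
        have habs : |w - w'| < (n : ℝ)/m := by
          rw [abs_sub_lt_iff]
          constructor <;> nlinarith [h1.2.1, h1.2.2, h2.2.1, h2.2.2]
        have hPW : P ⊆ Wts := Finset.filter_subset _ _
        have := hgap w (hPW hw) w' (hPW hw') hne'
        linarith
      have hcard : P.card = (P.image km).card :=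
        (Finset.card_image_of_injOn fun w hw w' hw' h => hinj w hw w' hw' h).symm
      have hsub : P.image km ⊆ Finset.range m := by
        intro k hk
        obtain ⟨w, hw, rfl⟩ := Finset.mem_image.1 hk
        exact Finset.mem_range.2 (hbounds w hw).1
      have hind : ∀ k ∈ P.image km,
          (Epar p (k * ((n : ℝ) / m)) ((n : ℝ) / m)).indicator (1 : (Fin n → ℝ) → ℝ≥0∞) v
            = 1 := by
        intro k hk
        obtain ⟨w, hw, rfl⟩ := Finset.mem_image.1 hk
        have hB := hbounds w hw
        rw [Finset.mem_filter] at hw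
        obtain ⟨x, hxpar, hxw⟩ := (hWts_mem w hw.1).2.2
        have : v ∈ Epar p (km w * ((n : ℝ) / m)) ((n : ℝ) / m) := by
          refine ⟨x, hxpar, ?_⟩
          rw [hxw]
          constructor
          · exact hB.2.1
          · calc w ≤ (km w + 1) * ((n : ℝ)/m) := hB.2.2
              _ = km w * ((n : ℝ)/m) + (n : ℝ)/m := by ring
        rw [Set.indicator_of_mem this]
        rfl
      calc (P.card : ℝ≥0∞) = ∑ _k ∈ P.image km, (1 : ℝ≥0∞) := by
            rw [hcard]; simp
        _ = ∑ k ∈ P.image km,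
            (Epar p (k * ((n : ℝ) / m)) ((n : ℝ) / m)).indicator 1 v :=
            Finset.sum_congr rfl fun k hk => (hind k hk).symm
        _ ≤ _ := Finset.sum_le_sum_of_subset hsub
  calc (paretoCount p v : ℝ≥0∞) ≤ ((1 + P.card : ℕ) : ℝ≥0∞) := by exact_mod_cast hcount
    _ = 1 + (P.card : ℝ≥0∞) := by push_cast; ring
    _ ≤ _ := by exact add_le_add le_rfl hPsum

section Prob

open ProbabilityTheory

variable {Ω : Type*} [MeasureSpace Ω] [IsProbabilityMeasure (ℙ : Measure Ω)]

/-- `iIndepFun` transfers along a.e. equality of the random variables. -/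
lemma iIndepFun_ae_congr {ι : Type*} {β : ι → Type*} [m : ∀ i, MeasurableSpace (β i)]
    {f g : ∀ i, Ω → β i} (hfg : ∀ i, f i =ᵐ[ℙ] g i)
    (h : iIndepFun f ℙ) : iIndepFun g ℙ := by
  rw [iIndepFun_iff_measure_inter_preimage_eq_mul] at h ⊢
  intro S sets hsets
  have hae : ∀ᵐ ω ∂ℙ, ∀ i ∈ (↑S : Set ι), f i ω = g i ω :=
    (MeasureTheory.ae_ball_iff S.countable_toSet).2 fun i _ => hfg i
  have h1 : (ℙ : Measure Ω) (⋂ i ∈ S, g i ⁻¹' sets i) = ℙ (⋂ i ∈ S, f i ⁻¹' sets i) := by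
    refine measure_congr (hae.mono fun ω hω => ?_)
    show (ω ∈ ⋂ i ∈ S, g i ⁻¹' sets i) = (ω ∈ ⋂ i ∈ S, f i ⁻¹' sets i)
    simp only [Set.mem_iInter, Set.mem_preimage, eq_iff_iff]
    exact ⟨fun h' i hi => (hω i (Finset.mem_coe.2 hi)) ▸ (h' i hi), fun h' i hi => (hω i (Finset.mem_coe.2 hi)) ▸ (h' i hi)⟩
  have h2 : ∀ i ∈ S, (ℙ : Measure Ω) (g i ⁻¹' sets i) = ℙ (f i ⁻¹' sets i) := by
    intro i hi
    refine measure_congr ((hfg i).mono fun ω hω => ?_)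
    show (ω ∈ g i ⁻¹' sets i) = (ω ∈ f i ⁻¹' sets i)
    simp only [Set.mem_preimage, eq_iff_iff]
    exact ⟨fun h' => hω ▸ h', fun h' => hω ▸ h'⟩
  rw [h1, h S hsets]
  exact (Finset.prod_congr rfl h2).symm

/-- Probability that a uniform random variable on an interval of length `1/φ`
lands in `(c, d]` is at most `φ (d - c)`. -/
lemma uniform_Ioc_bound {X : Ω → ℝ} {a₀ φ : ℝ} (hφ : 1 ≤ φ)
    (hu : pdf.IsUniform X (Set.Icc a₀ (a₀ + 1 / φ)) ℙ) (c d : ℝ) :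
    (ℙ : Measure Ω) (X ⁻¹' Set.Ioc c d) ≤ ENNReal.ofReal (φ * (d - c)) := by
  have hφ0 : (0 : ℝ) < φ := lt_of_lt_of_le one_pos hφ
  have hvol : volume (Set.Icc a₀ (a₀ + 1 / φ)) = ENNReal.ofReal (1 / φ) := by
    rw [Real.volume_Icc]
    norm_num
  have hns : volume (Set.Icc a₀ (a₀ + 1 / φ)) ≠ 0 := by
    rw [hvol]
    simp only [ne_eq, ENNReal.ofReal_eq_zero, not_le]
    positivity
  have hnt : volume (Set.Icc a₀ (a₀ + 1 / φ)) ≠ ⊤ := by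
    rw [hvol]; exact ENNReal.ofReal_ne_top
  rw [pdf.IsUniform.measure_preimage hns hnt hu measurableSet_Ioc]
  calc volume (Set.Icc a₀ (a₀ + 1 / φ) ∩ Set.Ioc c d) / volume (Set.Icc a₀ (a₀ + 1 / φ))
      ≤ volume (Set.Ioc c d) / volume (Set.Icc a₀ (a₀ + 1 / φ)) :=
        ENNReal.div_le_div_right (measure_mono Set.inter_subset_right) _
    _ = ENNReal.ofReal (d - c) / ENNReal.ofReal (1 / φ) := by rw [Real.volume_Ioc, hvol]
    _ = ENNReal.ofReal (d - c) * ENNReal.ofReal φ := by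
        rw [div_eq_mul_inv, one_div, ENNReal.ofReal_inv_of_pos hφ0, inv_inv]
    _ = ENNReal.ofReal φ * ENNReal.ofReal (d - c) := mul_comm _ _
    _ = ENNReal.ofReal (φ * (d - c)) := (ENNReal.ofReal_mul hφ0.le).symm

lemma uniform_mem_ae {X : Ω → ℝ} {a₀ φ : ℝ} (hφ : 1 ≤ φ)
    (hu : pdf.IsUniform X (Set.Icc a₀ (a₀ + 1 / φ)) ℙ) :
    ∀ᵐ ω ∂ℙ, X ω ∈ Set.Icc a₀ (a₀ + 1 / φ) := by
  have hφ0 : (0 : ℝ) < φ := lt_of_lt_of_le one_pos hφ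
  have hvol : volume (Set.Icc a₀ (a₀ + 1 / φ)) = ENNReal.ofReal (1 / φ) := by
    rw [Real.volume_Icc]; norm_num
  have hns : volume (Set.Icc a₀ (a₀ + 1 / φ)) ≠ 0 := by
    rw [hvol]
    simp only [ne_eq, ENNReal.ofReal_eq_zero, not_le]
    positivity
  have hnt : volume (Set.Icc a₀ (a₀ + 1 / φ)) ≠ ⊤ := by
    rw [hvol]; exact ENNReal.ofReal_ne_top
  have h := pdf.IsUniform.measure_preimage (A := (Set.Icc a₀ (a₀ + 1 / φ))ᶜ) hns hnt hu
    measurableSet_Icc.compl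
  rw [Set.inter_compl_self] at h
  simp only [measure_empty, ENNReal.zero_div] at h
  rw [ae_iff]
  convert h using 2
  rfl

/-- The per-coordinate probability bound for the selection event. -/
lemma prob_Esel_le {n : ℕ} (p : Fin n → ℝ) (φ : ℝ) (hφ : 1 ≤ φ)
    (a : Fin n → ℝ) (W : Fin n → Ω → ℝ) (hW : ∀ i, Measurable (W i))
    (hindep : iIndepFun W ℙ)
    (hunif : ∀ i, pdf.IsUniform (W i) (Set.Icc (a i) (a i + 1 / φ)) ℙ)
    (i : Fin n) (t ε : ℝ) :
    (ℙ : Measure Ω) {ω | (fun j => W j ω) ∈ Esel p i t ε} ≤ ENNReal.ofReal (φ * ε) := by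
  classical
  set R : Ω → ({x // x ∈ ({i}ᶜ : Finset (Fin n))} → ℝ) := fun ω j => W j.1 ω with hR
  have hRmeas : Measurable R := measurable_pi_lambda _ fun j => hW j.1
  have hIndep : IndepFun (W i) R ℙ := by
    have h := hindep.indepFun_finset {i} {i}ᶜ disjoint_compl_right hW
    have h2 := h.comp
      (measurable_pi_apply (⟨i, by simp⟩ : {x // x ∈ ({i} : Finset (Fin n))}))
      (measurable_id (α := {x // x ∈ ({i}ᶜ : Finset (Fin n))} → ℝ))
    exact h2
  have hmap : (ℙ : Measure Ω).map (fun ω => (W i ω, R ω))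
      = ((ℙ : Measure Ω).map (W i)).prod ((ℙ : Measure Ω).map R) :=
    (indepFun_iff_map_prod_eq_prod_map_map (hW i).aemeasurable hRmeas.aemeasurable).1 hIndep
  set Φ : ℝ × ({x // x ∈ ({i}ᶜ : Finset (Fin n))} → ℝ) → (Fin n → ℝ) :=
    fun q j => if h : j = i then q.1 else q.2 ⟨j, by simp [h]⟩ with hΦ
  have hΦmeas : Measurable Φ := by
    refine measurable_pi_lambda _ fun j => ?_
    by_cases h : j = i
    · simp only [hΦ, h, dif_pos]
      exact measurable_fst
    · simp only [hΦ, h, dif_neg, not_false_iff]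
      exact (measurable_pi_apply _).comp measurable_snd
  have hcomp : ∀ ω, Φ (W i ω, R ω) = fun j => W j ω := by
    intro ω
    funext j
    by_cases h : j = i
    · subst h; simp [hΦ]
    · simp [hΦ, h, hR]
  have hupdate : ∀ (u : ℝ) r, Φ (u, r) = Function.update (Φ (0, r)) i u := by
    intro u r
    funext j
    rw [Function.update_apply]
    by_cases h : j = i
    · simp [hΦ, h]
    · simp [hΦ, h]
  haveI : IsProbabilityMeasure ((ℙ : Measure Ω).map (W i)) :=
    Measure.isProbabilityMeasure_map (hW i).aemeasurable
  haveI : IsProbabilityMeasure ((ℙ : Measure Ω).map R) :=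
    Measure.isProbabilityMeasure_map hRmeas.aemeasurable
  have hEset : {ω | (fun j => W j ω) ∈ Esel p i t ε}
      = (fun ω => (W i ω, R ω)) ⁻¹' (Φ ⁻¹' Esel p i t ε) := by
    ext ω
    simp only [Set.mem_setOf_eq, Set.mem_preimage]
    rw [hcomp ω]
  rw [hEset, ← Measure.map_apply ((hW i).prodMk hRmeas) (hΦmeas (measurableSet_Esel p i t ε)),
    hmap, Measure.prod_apply_symm (hΦmeas (measurableSet_Esel p i t ε))]
  have hsec : ∀ r, ((ℙ : Measure Ω).map (W i)) ((fun u => (u, r)) ⁻¹' (Φ ⁻¹' Esel p i t ε))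
      ≤ ENNReal.ofReal (φ * ε) := by
    intro r
    obtain ⟨c, hc⟩ := Esel_section_subset p (Φ (0, r)) i t ε
    have hsub : ((fun u => (u, r)) ⁻¹' (Φ ⁻¹' Esel p i t ε)) ⊆ Set.Ioc c (c + ε) := by
      intro u hu
      simp only [Set.mem_preimage] at hu
      rw [hupdate u r] at hu
      exact hc hu
    calc ((ℙ : Measure Ω).map (W i)) ((fun u => (u, r)) ⁻¹' (Φ ⁻¹' Esel p i t ε))
        ≤ ((ℙ : Measure Ω).map (W i)) (Set.Ioc c (c + ε)) := measure_mono hsub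
      _ = ℙ (W i ⁻¹' Set.Ioc c (c + ε)) :=
          Measure.map_apply (hW i) measurableSet_Ioc
      _ ≤ ENNReal.ofReal (φ * (c + ε - c)) := uniform_Ioc_bound hφ (hunif i) c (c + ε)
      _ = ENNReal.ofReal (φ * ε) := by ring_nf
  calc (∫⁻ r, ((ℙ : Measure Ω).map (W i)) ((fun u => (u, r)) ⁻¹' (Φ ⁻¹' Esel p i t ε))
        ∂((ℙ : Measure Ω).map R))
      ≤ ∫⁻ _r, ENNReal.ofReal (φ * ε) ∂((ℙ : Measure Ω).map R) := lintegral_mono hsec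
    _ = ENNReal.ofReal (φ * ε) := by simp

end Prob
/-- Knapsack with arbitrary nonnegative profits and weights drawn independently and
uniformly from intervals `A_i ⊆ [0,1]` of length `1/φ`: the expected number of
Pareto-optimal solutions is at most `n²·φ + 1`. -/
theorem expected_pareto_count_le {Ω : Type*} [MeasureSpace Ω]
    [IsProbabilityMeasure (ℙ : Measure Ω)] {n : ℕ}
    (p : Fin n → ℝ) (hp : ∀ i, 0 ≤ p i) (φ : ℝ) (hφ : 1 ≤ φ)
    (a : Fin n → ℝ) (ha : ∀ i, 0 ≤ a i ∧ a i + 1 / φ ≤ 1)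
    (W : Fin n → Ω → ℝ)
    (hindep : ProbabilityTheory.iIndepFun W ℙ)
    (hunif : ∀ i, pdf.IsUniform (W i) (Set.Icc (a i) (a i + 1 / φ)) ℙ) :
    ∫⁻ ω, (paretoCount p (fun i => W i ω) : ℝ≥0∞) ∂ℙ
      ≤ ENNReal.ofReal ((n : ℝ) ^ 2 * φ + 1) := by
  classical
  have hφ0 : (0 : ℝ) < φ := lt_of_lt_of_le one_pos hφ
  have hvol : ∀ i, volume (Set.Icc (a i) (a i + 1 / φ)) = ENNReal.ofReal (1 / φ) := fun i => by
    rw [Real.volume_Icc]; norm_num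
  have hns : ∀ i, volume (Set.Icc (a i) (a i + 1 / φ)) ≠ 0 := fun i => by
    rw [hvol i]
    simp only [ne_eq, ENNReal.ofReal_eq_zero, not_le]
    positivity
  have hnt : ∀ i, volume (Set.Icc (a i) (a i + 1 / φ)) ≠ ⊤ := fun i => by
    rw [hvol i]; exact ENNReal.ofReal_ne_top
  have hWae : ∀ i, AEMeasurable (W i) ℙ := fun i =>
    pdf.IsUniform.aemeasurable (hns i) (hnt i) (hunif i)
  set W' : Fin n → Ω → ℝ := fun i => (hWae i).mk (W i) with hW'
  have hW'meas : ∀ i, Measurable (W' i) := fun i => (hWae i).measurable_mk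
  have haeeq : ∀ i, W i =ᵐ[ℙ] W' i := fun i => (hWae i).ae_eq_mk
  have hindep' : ProbabilityTheory.iIndepFun W' ℙ :=
    iIndepFun_ae_congr haeeq hindep
  have hunif' : ∀ i, pdf.IsUniform (W' i) (Set.Icc (a i) (a i + 1 / φ)) ℙ := fun i => by
    have : (ℙ : Measure Ω).map (W i) = (ℙ : Measure Ω).map (W' i) :=
      Measure.map_congr (haeeq i)
    unfold pdf.IsUniform at hunif ⊢
    rw [← this]
    exact hunif i
  have hint_eq : ∫⁻ ω, (paretoCount p (fun i => W i ω) : ℝ≥0∞) ∂ℙ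
      = ∫⁻ ω, (paretoCount p (fun i => W' i ω) : ℝ≥0∞) ∂ℙ := by
    refine lintegral_congr_ae ?_
    have h := ae_all_iff.2 haeeq
    exact h.mono fun ω hω => by
      have heq : (fun i => W i ω) = fun i => W' i ω := funext hω
      simp only [heq]
  rw [hint_eq]
  set V : Ω → (Fin n → ℝ) := fun ω i => W' i ω with hV
  have hVmeas : Measurable V := measurable_pi_lambda _ hW'meas
  -- key probability estimate on each weight window
  have hkey : ∀ t ε : ℝ, 0 ≤ t →
      (ℙ : Measure Ω) (V ⁻¹' Epar p t ε) ≤ (n : ℝ≥0∞) * ENNReal.ofReal (φ * ε) := by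
    intro t ε ht
    set B : Set Ω := {ω | ∀ j, 0 ≤ W' j ω} with hB
    have hBc : (ℙ : Measure Ω) Bᶜ = 0 := by
      have hae : ∀ᵐ ω ∂ℙ, ∀ j, 0 ≤ W' j ω := ae_all_iff.2 fun j =>
        (uniform_mem_ae hφ (hunif' j)).mono fun ω h => le_trans (ha j).1 h.1
      exact ae_iff.1 hae
    have hsub : (V ⁻¹' Epar p t ε) ∩ B ⊆ ⋃ i, V ⁻¹' Esel p i t ε := by
      rintro ω ⟨h1, h2⟩
      obtain ⟨i, hi⟩ := Epar_subset_iUnion_Esel p h2 ht h1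
      exact Set.mem_iUnion.2 ⟨i, hi⟩
    calc (ℙ : Measure Ω) (V ⁻¹' Epar p t ε)
        ≤ ℙ (((V ⁻¹' Epar p t ε) ∩ B) ∪ Bᶜ) := measure_mono fun ω h => by
          by_cases hb : ω ∈ B
          exacts [Or.inl ⟨h, hb⟩, Or.inr hb]
      _ ≤ ℙ ((V ⁻¹' Epar p t ε) ∩ B) + ℙ Bᶜ := measure_union_le _ _
      _ = ℙ ((V ⁻¹' Epar p t ε) ∩ B) := by rw [hBc, add_zero]
      _ ≤ ℙ (⋃ i, V ⁻¹' Esel p i t ε) := measure_mono hsub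
      _ ≤ ∑ i, ℙ (V ⁻¹' Esel p i t ε) := measure_iUnion_fintype_le _ _
      _ ≤ ∑ _i : Fin n, ENNReal.ofReal (φ * ε) := Finset.sum_le_sum fun i _ =>
          prob_Esel_le p φ hφ a W' hW'meas hindep' hunif' i t ε
      _ = (n : ℝ≥0∞) * ENNReal.ofReal (φ * ε) := by
          rw [Finset.sum_const, Finset.card_univ, Fintype.card_fin, nsmul_eq_mul]
  -- the discretized counting functions
  set g : ℕ → Ω → ℝ≥0∞ := fun m ω => 1 + ∑ k ∈ Finset.range m,
    (Epar p (k * ((n : ℝ) / m)) ((n : ℝ) / m)).indicator 1 (V ω) with hg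
  have hgmeas : ∀ m, Measurable (g m) := by
    intro m
    refine Measurable.add (f := fun _ => (1 : ℝ≥0∞)) (g := fun ω => ∑ k ∈ Finset.range m,
      (Epar p (k * ((n : ℝ) / m)) ((n : ℝ) / m)).indicator 1 (V ω)) measurable_const (Finset.measurable_sum _ fun k _ => ?_)
    exact (measurable_const.indicator
      (measurableSet_Epar p (k * ((n : ℝ) / m)) ((n : ℝ) / m))).comp hVmeas
  have hptwise : ∀ᵐ ω ∂ℙ, (paretoCount p (V ω) : ℝ≥0∞)
      ≤ Filter.liminf (fun m => g m ω) Filter.atTop := by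
    have hbox : ∀ᵐ ω ∂ℙ, ∀ j, W' j ω ∈ Set.Icc (a j) (a j + 1 / φ) :=
      ae_all_iff.2 fun j => uniform_mem_ae hφ (hunif' j)
    refine hbox.mono fun ω hω => ?_
    have hv0 : ∀ j, 0 ≤ V ω j := fun j => le_trans (ha j).1 (hω j).1
    have hv1 : ∀ j, V ω j ≤ 1 := fun j => le_trans (hω j).2 (ha j).2
    obtain ⟨M, hM⟩ := count_le_indicator_sum p (V ω) hv0 hv1
    refine Filter.le_liminf_of_le (by isBoundedDefault) ?_
    exact Filter.eventually_atTop.2 ⟨M, fun m hm => hM m hm⟩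
  have hgint : ∀ m : ℕ, ∫⁻ ω, g m ω ∂ℙ ≤ 1 + ENNReal.ofReal ((n : ℝ) ^ 2 * φ) := by
    intro m
    have hmeas_ind : ∀ k : ℕ, Measurable fun ω =>
        (Epar p (k * ((n : ℝ) / m)) ((n : ℝ) / m)).indicator (1 : (Fin n → ℝ) → ℝ≥0∞) (V ω) :=
      fun k => (measurable_const.indicator
        (measurableSet_Epar p (k * ((n : ℝ) / m)) ((n : ℝ) / m))).comp hVmeas
    have hsum_meas : Measurable fun ω => ∑ k ∈ Finset.range m,
        (Epar p (k * ((n : ℝ) / m)) ((n : ℝ) / m)).indicator 1 (V ω) :=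
      Finset.measurable_sum _ fun k _ => hmeas_ind k
    have h1 : ∫⁻ ω, g m ω ∂ℙ = 1 + ∑ k ∈ Finset.range m,
        (ℙ : Measure Ω) (V ⁻¹' Epar p (k * ((n : ℝ) / m)) ((n : ℝ) / m)) := by
      rw [hg]
      simp only
      rw [lintegral_add_left measurable_const, lintegral_const, measure_univ, mul_one,
        lintegral_finset_sum _ fun k _ => hmeas_ind k]
      congr 1
      refine Finset.sum_congr rfl fun k _ => ?_
      have heq : ∀ ω, (Epar p (k * ((n : ℝ) / m)) ((n : ℝ) / m)).indicator
          (1 : (Fin n → ℝ) → ℝ≥0∞) (V ω)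
          = (V ⁻¹' Epar p (k * ((n : ℝ) / m)) ((n : ℝ) / m)).indicator
            (1 : Ω → ℝ≥0∞) ω := by
        intro ω
        by_cases h : V ω ∈ Epar p (k * ((n : ℝ) / m)) ((n : ℝ) / m) <;>
          simp [h, Set.indicator_apply, Set.mem_preimage]
      simp_rw [heq]
      rw [lintegral_indicator_one (hVmeas (measurableSet_Epar _ _ _))]
    rw [h1]
    rcases Nat.eq_zero_or_pos m with hm | hm
    · subst hm
      simp
    have hm0 : (0 : ℝ) < m := by exact_mod_cast hm
    have h2 : ∑ k ∈ Finset.range m,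
        (ℙ : Measure Ω) (V ⁻¹' Epar p (k * ((n : ℝ) / m)) ((n : ℝ) / m))
        ≤ ∑ _k ∈ Finset.range m, (n : ℝ≥0∞) * ENNReal.ofReal (φ * ((n : ℝ) / m)) :=
      Finset.sum_le_sum fun k _ => hkey _ _ (by positivity)
    have h3 : ∑ _k ∈ Finset.range m, (n : ℝ≥0∞) * ENNReal.ofReal (φ * ((n : ℝ) / m))
        = ENNReal.ofReal ((n : ℝ) ^ 2 * φ) := by
      rw [Finset.sum_const, Finset.card_range, nsmul_eq_mul]
      have hn' : ((n : ℝ≥0∞)) = ENNReal.ofReal (n : ℝ) := by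
        rw [ENNReal.ofReal_natCast]
      have hm' : ((m : ℝ≥0∞)) = ENNReal.ofReal (m : ℝ) := by
        rw [ENNReal.ofReal_natCast]
      rw [hn', hm', ← ENNReal.ofReal_mul (by positivity), ← ENNReal.ofReal_mul (by positivity)]
      congr 1
      field_simp
    exact add_le_add le_rfl (le_trans h2 (le_of_eq h3))
  calc ∫⁻ ω, (paretoCount p (fun i => W' i ω) : ℝ≥0∞) ∂ℙ
      ≤ ∫⁻ ω, Filter.liminf (fun m => g m ω) Filter.atTop ∂ℙ := lintegral_mono_ae hptwise
    _ ≤ Filter.liminf (fun m => ∫⁻ ω, g m ω ∂ℙ) Filter.atTop := lintegral_liminf_le hgmeas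
    _ ≤ 1 + ENNReal.ofReal ((n : ℝ) ^ 2 * φ) := by
        refine le_trans (Filter.liminf_le_liminf (Filter.Eventually.of_forall hgint)) ?_
        rw [Filter.liminf_const]
    _ = ENNReal.ofReal ((n : ℝ) ^ 2 * φ + 1) := by
        rw [ENNReal.ofReal_add (by positivity) zero_le_one, ENNReal.ofReal_one, add_comm]
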